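/- Let X be a finite nonempty set, let Π and P be full-support probability distributions on X with P ≠ Π, and set α = max_{x∈X} P(x)/Π(x) and β = max_{x∈X} Π(x)/P(x) (so that α > 1). Define λ₀ = (D_KL(P‖Π) + D_KL(Π‖P))/(α − 1). Then 0 ≤ λ₀ ≤ (αβ − 1)²/(2αβ(α − 1)). -/

import Mathlib

open Finset

lemma log_le_half_sub_inv {t : ℝ} (ht : 1 ≤ t) : Real.log t ≤ (t - 1/t) / 2 := by
  set f : ℝ → ℝ := fun x => (x - 1/x)/2 - Real.log x with hf
  have hder : ∀ x : ℝ, 0 < x → HasDerivAt f ((1 + 1/x^2)/2 - 1/x) x := by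
    intro x hx
    have h1 : HasDerivAt (fun y : ℝ => 1/y) (-(1/x^2)) x := by
      simpa [one_div] using hasDerivAt_inv (ne_of_gt hx)
    have h2 : HasDerivAt (fun y : ℝ => (y - 1/y)/2) ((1 - -(1/x^2))/2) x :=
      ((hasDerivAt_id x).sub h1).div_const 2
    have h3 := (h2.sub (Real.hasDerivAt_log (ne_of_gt hx)))
    refine h3.congr_deriv ?_
    ring
  have hmono : MonotoneOn f (Set.Ici 1) := by
    apply monotoneOn_of_deriv_nonneg (convex_Ici 1)
    · intro x hx
      have hx0 : (0:ℝ) < x := lt_of_lt_of_le one_pos hx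
      exact ((hder x hx0).differentiableAt).continuousAt.continuousWithinAt
    · intro x hx
      rw [interior_Ici] at hx
      exact ((hder x (lt_trans one_pos hx)).differentiableAt).differentiableWithinAt
    · intro x hx
      rw [interior_Ici] at hx
      have hx0 : (0:ℝ) < x := lt_trans one_pos hx
      rw [(hder x hx0).deriv]
      have e : 1/x^2 = (1/x)^2 := by ring
      rw [e]
      nlinarith [sq_nonneg (1 - 1/x)]
  have h01 := hmono (Set.self_mem_Ici) ht ht
  simp only [hf] at h01
  simp only [Real.log_one, one_div, inv_one, sub_self] at h01
  norm_num at h01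
  rw [one_div]; exact h01


/-- Kullback–Leibler divergence between two (full-support) distributions on a finite set. -/
noncomputable def KLdiv {X : Type*} [Fintype X] (P Q : X → ℝ) : ℝ :=
  ∑ x, P x * Real.log (P x / Q x)

/-- For full-support distributions `P ≠ Pi`, with
`α = max_x P x / Pi x` and `β = max_x Pi x / P x` (so that `α > 1`), the optimal variance
parameter `λ₀ = (D_KL(P‖Pi) + D_KL(Pi‖P)) / (α - 1)` satisfies
`0 ≤ λ₀ ≤ (αβ - 1)² / (2αβ(α - 1))`. -/
theorem optimal_lambda_bounds {X : Type*} [Fintype X] [Nonempty X]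
    (Pi P : X → ℝ)
    (hPipos : ∀ x, 0 < Pi x) (hPisum : ∑ x, Pi x = 1)
    (hPpos : ∀ x, 0 < P x) (hPsum : ∑ x, P x = 1)
    (hne : P ≠ Pi) :
    1 < univ.sup' univ_nonempty (fun x => P x / Pi x) ∧
    0 ≤ (KLdiv P Pi + KLdiv Pi P)
        / (univ.sup' univ_nonempty (fun x => P x / Pi x) - 1) ∧
    (KLdiv P Pi + KLdiv Pi P)
        / (univ.sup' univ_nonempty (fun x => P x / Pi x) - 1)
      ≤ (univ.sup' univ_nonempty (fun x => P x / Pi x)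
            * univ.sup' univ_nonempty (fun x => Pi x / P x) - 1) ^ 2
        / (2 * univ.sup' univ_nonempty (fun x => P x / Pi x)
            * univ.sup' univ_nonempty (fun x => Pi x / P x)
            * (univ.sup' univ_nonempty (fun x => P x / Pi x) - 1)) := by
  set a := univ.sup' univ_nonempty (fun x => P x / Pi x) with ha
  set b := univ.sup' univ_nonempty (fun x => Pi x / P x) with hb
  -- basic facts
  have hPle : ∀ x, P x ≤ a * Pi x := by
    intro x
    have : P x / Pi x ≤ a := Finset.le_sup' (fun y => P y / Pi y) (mem_univ x)
    exact (div_le_iff₀ (hPipos x)).mp this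
  have hPile : ∀ x, Pi x ≤ b * P x := by
    intro x
    have : Pi x / P x ≤ b := Finset.le_sup' (fun y => Pi y / P y) (mem_univ x)
    exact (div_le_iff₀ (hPpos x)).mp this
  -- exist strict comparisons
  have hexP : ∃ x, Pi x < P x := by
    by_contra h
    push_neg at h
    apply hne
    funext x
    exact (Finset.sum_eq_sum_iff_of_le (fun i _ => h i)).mp
      (hPsum.trans hPisum.symm) x (mem_univ x)
  have hexPi : ∃ x, P x < Pi x := by
    by_contra h
    push_neg at h
    apply hne
    funext x
    exact ((Finset.sum_eq_sum_iff_of_le (fun i _ => h i)).mp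
      (hPisum.trans hPsum.symm) x (mem_univ x)).symm
  have ha1 : 1 < a := by
    obtain ⟨x, hx⟩ := hexP
    calc (1:ℝ) < P x / Pi x := (one_lt_div (hPipos x)).mpr hx
    _ ≤ a := Finset.le_sup' (fun y => P y / Pi y) (mem_univ x)
  have hb1 : 1 < b := by
    obtain ⟨x, hx⟩ := hexPi
    calc (1:ℝ) < Pi x / P x := (one_lt_div (hPpos x)).mpr hx
    _ ≤ b := Finset.le_sup' (fun y => Pi y / P y) (mem_univ x)
  have ha0 : (0:ℝ) < a := lt_trans one_pos ha1
  have hb0 : (0:ℝ) < b := lt_trans one_pos hb1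
  have hab1 : 1 < a * b := by nlinarith
  have hA1 : (0:ℝ) < a - 1 := by linarith
  -- rewrite the symmetric KL divergence
  have hsym : KLdiv P Pi + KLdiv Pi P
      = ∑ x, (P x - Pi x) * Real.log (P x / Pi x) := by
    unfold KLdiv
    rw [← Finset.sum_add_distrib]
    apply Finset.sum_congr rfl
    intro x _
    rw [Real.log_div (ne_of_gt (hPpos x)) (ne_of_gt (hPipos x)),
        Real.log_div (ne_of_gt (hPipos x)) (ne_of_gt (hPpos x))]
    ring
  -- nonnegativity of each term
  have hterm_nonneg : ∀ x, 0 ≤ (P x - Pi x) * Real.log (P x / Pi x) := by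
    intro x
    rcases le_or_gt (Pi x) (P x) with h | h
    · apply mul_nonneg (by linarith)
      apply Real.log_nonneg
      rw [le_div_iff₀ (hPipos x)]; linarith
    · have h1 : P x - Pi x ≤ 0 := by linarith
      have h2 : Real.log (P x / Pi x) ≤ 0 :=
        Real.log_nonpos (div_pos (hPpos x) (hPipos x)).le
          (by rw [div_le_one (hPipos x)]; linarith)
      nlinarith [mul_nonneg (neg_nonneg.2 h1) (neg_nonneg.2 h2)]
  have hnum_nonneg : 0 ≤ KLdiv P Pi + KLdiv Pi P := by
    rw [hsym]
    exact Finset.sum_nonneg (fun x _ => hterm_nonneg x)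
  refine ⟨ha1, div_nonneg hnum_nonneg (le_of_lt hA1), ?_⟩
  -- the upper bound on the numerator
  set δ : ℝ := ∑ x, max (P x - Pi x) 0 with hδ
  have hδeq : ∑ x, max (Pi x - P x) 0 = δ := by
    have : δ - ∑ x, max (Pi x - P x) 0 = 0 := by
      rw [hδ, ← Finset.sum_sub_distrib]
      have : ∀ x ∈ univ, max (P x - Pi x) 0 - max (Pi x - P x) 0 = P x - Pi x := by
        intro x _
        rcases le_or_gt (Pi x) (P x) with h | h
        · rw [max_eq_left (by linarith), max_eq_right (by linarith)]; ring
        · rw [max_eq_right (by linarith), max_eq_left (by linarith)]; ring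
      rw [Finset.sum_congr rfl this, Finset.sum_sub_distrib, hPsum, hPisum]
      ring
    linarith
  have hlog_a : (0:ℝ) ≤ Real.log a := Real.log_nonneg (le_of_lt ha1)
  have hlog_b : (0:ℝ) ≤ Real.log b := Real.log_nonneg (le_of_lt hb1)
  -- step 1: symKL ≤ δ * log(ab)
  have hstep1 : KLdiv P Pi + KLdiv Pi P ≤ δ * Real.log (a * b) := by
    rw [hsym, Real.log_mul (ne_of_gt ha0) (ne_of_gt hb0)]
    have : ∀ x ∈ univ, (P x - Pi x) * Real.log (P x / Pi x)
        ≤ max (P x - Pi x) 0 * Real.log a + max (Pi x - P x) 0 * Real.log b := by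
      intro x _
      rcases le_or_gt (Pi x) (P x) with h | h
      · rw [max_eq_left (by linarith : (0:ℝ) ≤ P x - Pi x),
            max_eq_right (by linarith : Pi x - P x ≤ (0:ℝ))]
        have hlog : Real.log (P x / Pi x) ≤ Real.log a := by
          apply Real.log_le_log (div_pos (hPpos x) (hPipos x))
          exact Finset.le_sup' (fun y => P y / Pi y) (mem_univ x)
        nlinarith
      · rw [max_eq_right (by linarith : P x - Pi x ≤ (0:ℝ)),
            max_eq_left (by linarith : (0:ℝ) ≤ Pi x - P x)]
        have heq : (P x - Pi x) * Real.log (P x / Pi x)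
            = (Pi x - P x) * Real.log (Pi x / P x) := by
          rw [Real.log_div (ne_of_gt (hPpos x)) (ne_of_gt (hPipos x)),
              Real.log_div (ne_of_gt (hPipos x)) (ne_of_gt (hPpos x))]
          ring
        rw [heq]
        have hlog : Real.log (Pi x / P x) ≤ Real.log b := by
          apply Real.log_le_log (div_pos (hPipos x) (hPpos x))
          exact Finset.le_sup' (fun y => Pi y / P y) (mem_univ x)
        nlinarith
    calc ∑ x, (P x - Pi x) * Real.log (P x / Pi x)
        ≤ ∑ x, (max (P x - Pi x) 0 * Real.log a + max (Pi x - P x) 0 * Real.log b) :=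
          Finset.sum_le_sum this
      _ = δ * Real.log a + δ * Real.log b := by
          rw [Finset.sum_add_distrib, ← Finset.sum_mul, ← Finset.sum_mul, hδeq]
      _ = δ * (Real.log a + Real.log b) := by ring
  -- step 2: δ ≤ (a-1)(b-1)/(ab-1)
  have hstep2 : δ ≤ (a - 1) * (b - 1) / (a * b - 1) := by
    have hab0 : (0:ℝ) < a * b - 1 := by linarith
    have hpt : ∀ x ∈ univ, max (P x - Pi x) 0
        ≤ (a - 1) / (a * b - 1) * (b * P x - Pi x) := by
      intro x _
      have h1 := hPle x
      have h2 := hPile x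
      rcases le_or_gt (Pi x) (P x) with h | h
      · rw [max_eq_left (by linarith)]
        rw [div_mul_eq_mul_div, le_div_iff₀ hab0]
        nlinarith
      · rw [max_eq_right (by linarith)]
        apply mul_nonneg
        · positivity
        · linarith
    calc δ ≤ ∑ x, (a - 1) / (a * b - 1) * (b * P x - Pi x) := Finset.sum_le_sum hpt
      _ = (a - 1) / (a * b - 1) * (b * (∑ x, P x) - ∑ x, Pi x) := by
          rw [← Finset.mul_sum, Finset.sum_sub_distrib, Finset.mul_sum]
      _ = (a - 1) * (b - 1) / (a * b - 1) := by
          rw [hPsum, hPisum]; ring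
  -- step 3: log(ab) ≤ ((ab)^2-1)/(2ab)
  have hstep3 : Real.log (a * b) ≤ (a * b - 1) * (a * b + 1) / (2 * (a * b)) := by
    have := log_le_half_sub_inv (le_of_lt hab1 : (1:ℝ) ≤ a * b)
    calc Real.log (a * b) ≤ (a * b - 1 / (a * b)) / 2 := this
      _ = (a * b - 1) * (a * b + 1) / (2 * (a * b)) := by
          field_simp
          ring
  -- combine
  have hab0 : (0:ℝ) < a * b - 1 := by linarith
  have hnum : KLdiv P Pi + KLdiv Pi P ≤ (a * b - 1) ^ 2 / (2 * (a * b)) := by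
    have hδ0 : 0 ≤ δ := Finset.sum_nonneg (fun x _ => le_max_right _ _)
    have hlogab : 0 ≤ Real.log (a * b) := Real.log_nonneg (le_of_lt hab1)
    have h4 : δ * Real.log (a * b)
        ≤ ((a - 1) * (b - 1) / (a * b - 1)) * ((a * b - 1) * (a * b + 1) / (2 * (a * b))) := by
      apply mul_le_mul hstep2 hstep3 hlogab
      exact div_nonneg (mul_nonneg (by linarith) (by linarith)) (by linarith)
    have h5 : ((a - 1) * (b - 1) / (a * b - 1)) * ((a * b - 1) * (a * b + 1) / (2 * (a * b)))
        = (a - 1) * (b - 1) * (a * b + 1) / (2 * (a * b)) := by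
      field_simp
    have h6 : (a - 1) * (b - 1) * (a * b + 1) ≤ (a * b - 1) ^ 2 := by
      nlinarith [mul_nonneg hb0.le (sq_nonneg (a-1)), mul_nonneg ha0.le (sq_nonneg (b-1))]
    have h7 : (a - 1) * (b - 1) * (a * b + 1) / (2 * (a * b)) ≤ (a * b - 1) ^ 2 / (2 * (a * b)) :=
      (div_le_div_iff_of_pos_right (mul_pos two_pos (mul_pos ha0 hb0))).mpr h6
    calc KLdiv P Pi + KLdiv Pi P ≤ δ * Real.log (a * b) := hstep1
      _ ≤ (a - 1) * (b - 1) * (a * b + 1) / (2 * (a * b)) := by rw [← h5]; exact h4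
      _ ≤ (a * b - 1) ^ 2 / (2 * (a * b)) := h7
  -- divide by (a-1)
  rw [div_le_iff₀ hA1]
  have heq : (a * b - 1) ^ 2 / (2 * a * b * (a - 1)) * (a - 1) = (a * b - 1) ^ 2 / (2 * (a * b)) := by
    rw [show 2 * a * b * (a - 1) = (2 * (a * b)) * (a - 1) by ring, ← div_div,
        div_mul_cancel₀ _ (ne_of_gt hA1)]
  exact hnum.trans heq.ge
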